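/- arXiv:math/0007029 — 4 statements merged into one kernel-verified Lean document; each statement's English description precedes it below -/
import Mathlib

section
/- Let Λ be a row-finite k-graph with no sources. For every vertex v ∈ Λ^0 the infinite path space Λ^∞(v) = {x ∈ Λ^∞ : x(0) = v} is nonempty. -/
open CategoryTheory

universe v u

/-- A `k`-graph structure: a degree functor `d : Λ → ℕ^k` satisfying the unique
factorisation property.  Here a morphism `f : a ⟶ b` has range `r f = a` and
source `s f = b`, so that composition `f ≫ g` corresponds to the paper's `λμ`. -/
class KGraph (k : ℕ) (Λ : Type u) [Category.{v} Λ] where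
  d : ∀ {a b : Λ}, (a ⟶ b) → (Fin k → ℕ)
  d_id : ∀ a : Λ, d (𝟙 a) = 0
  d_comp : ∀ {a b c : Λ} (f : a ⟶ b) (g : b ⟶ c), d (f ≫ g) = d f + d g
  factor : ∀ {a b : Λ} (f : a ⟶ b) (m n : Fin k → ℕ), d f = m + n →
    ∃! t : Σ c : Λ, (a ⟶ c) × (c ⟶ b),
      d t.2.1 = m ∧ d t.2.2 = n ∧ t.2.1 ≫ t.2.2 = f

variable (k : ℕ) (Λ : Type u) [Category.{v} Λ] [KGraph k Λ]

/-- An infinite path in a `k`-graph `Λ`: a degree-preserving functor from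
`Ω_k = {(m,n) ∈ ℕ^k × ℕ^k : m ≤ n}` to `Λ`.  `vert m` is the image `x(m)` of the
object `m`, and `edge m n h` is the image `x(m,n)` of the morphism `(m,n)`. -/
structure InfPath where
  vert : (Fin k → ℕ) → Λ
  edge : ∀ m n : Fin k → ℕ, m ≤ n → (vert m ⟶ vert n)
  edge_self : ∀ m, edge m m le_rfl = 𝟙 (vert m)
  edge_comp : ∀ m n p (h₁ : m ≤ n) (h₂ : n ≤ p),
    edge m n h₁ ≫ edge n p h₂ = edge m p (h₁.trans h₂)
  deg : ∀ m n (h : m ≤ n), KGraph.d (k := k) (edge m n h) = n - m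

variable {k Λ}

/-- The shift map `σ^p` on infinite paths: `σ^p(x)(m,n) = x(m+p, n+p)`. -/
def InfPath.shift (x : InfPath k Λ) (p : Fin k → ℕ) : InfPath k Λ where
  vert m := x.vert (m + p)
  edge m n h := x.edge (m + p) (n + p) (add_le_add h le_rfl)
  edge_self m := x.edge_self (m + p)
  edge_comp m n q h₁ h₂ := x.edge_comp _ _ _ _ _
  deg m n h := by
    rw [x.deg]
    funext i
    simp [Nat.add_sub_add_right]

namespace KGraphProofAux

variable {k : ℕ} {Λ : Type u} [Category.{v} Λ] [KGraph k Λ]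

theorem split_aux {a b : Λ} (f : a ⟶ b) (m : Fin k → ℕ)
    (hm : m ≤ KGraph.d (k := k) f) :
    KGraph.d (k := k) f = m + (KGraph.d (k := k) f - m) := by
  funext i
  exact (Nat.add_sub_cancel' (hm i)).symm

/-- The unique factorisation of `f` with first piece of degree `m`. -/
noncomputable def split {a b : Λ} (f : a ⟶ b) (m : Fin k → ℕ)
    (hm : m ≤ KGraph.d (k := k) f) : Σ c : Λ, (a ⟶ c) × (c ⟶ b) :=
  (KGraph.factor f m (KGraph.d (k := k) f - m) (split_aux f m hm)).exists.choose

theorem split_spec {a b : Λ} (f : a ⟶ b) (m : Fin k → ℕ)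
    (hm : m ≤ KGraph.d (k := k) f) :
    KGraph.d (k := k) (split f m hm).2.1 = m ∧
    KGraph.d (k := k) (split f m hm).2.2 = KGraph.d (k := k) f - m ∧
    (split f m hm).2.1 ≫ (split f m hm).2.2 = f :=
  (KGraph.factor f m (KGraph.d (k := k) f - m) (split_aux f m hm)).exists.choose_spec

theorem split_unique {a b : Λ} (f : a ⟶ b) (m : Fin k → ℕ)
    (hm : m ≤ KGraph.d (k := k) f) (t : Σ c : Λ, (a ⟶ c) × (c ⟶ b))
    (h1 : KGraph.d (k := k) t.2.1 = m)
    (h2 : KGraph.d (k := k) t.2.2 = KGraph.d (k := k) f - m)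
    (h3 : t.2.1 ≫ t.2.2 = f) : t = split f m hm :=
  (KGraph.factor f m (KGraph.d (k := k) f - m) (split_aux f m hm)).unique
    ⟨h1, h2, h3⟩ (split_spec f m hm)

theorem pair_ext {a w c : Λ} {f : a ⟶ c} {e e' : c ⟶ w}
    (h : (⟨c, f, e⟩ : Σ x : Λ, (a ⟶ x) × (x ⟶ w)) = ⟨c, f, e'⟩) : e = e' := by
  simpa using h

section

variable (hns : ∀ (w : Λ) (n : Fin k → ℕ),
    {t : Σ b : Λ, w ⟶ b | KGraph.d (k := k) t.2 = n}.Nonempty) (v : Λ)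

/-- A chain of paths out of `v` of degree `(N, N, …, N)`. -/
noncomputable def g : ℕ → Σ w : Λ, v ⟶ w
  | 0 => ⟨v, 𝟙 v⟩
  | (N + 1) =>
    let t := (hns (g N).1 (fun _ => 1)).some
    ⟨t.1, (g N).2 ≫ t.2⟩

theorem g_d : ∀ N : ℕ, KGraph.d (k := k) (g hns v N).2 = fun _ => N
  | 0 => by
    show KGraph.d (k := k) (𝟙 v) = _
    rw [KGraph.d_id]; funext i; rfl
  | (N + 1) => by
    have ht : KGraph.d (k := k) ((hns (g hns v N).1 (fun _ => 1)).some).2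
        = fun _ => 1 := (hns (g hns v N).1 (fun _ => 1)).some_mem
    show KGraph.d (k := k) ((g hns v N).2 ≫ _) = _
    refine (KGraph.d_comp _ _).trans ?_
    refine (congrArg₂ (· + ·) (g_d N) ht).trans ?_
    funext i; rfl

theorem g_bound (m : Fin k → ℕ) (N : ℕ) (hN : ∀ i, m i ≤ N) :
    m ≤ KGraph.d (k := k) (g hns v N).2 := by
  rw [g_d]; exact fun i => hN i

/-- The initial segment of `g N` of degree `m`, together with its tail. -/
noncomputable def Q (m : Fin k → ℕ) (N : ℕ) (hN : ∀ i, m i ≤ N) :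
    Σ c : Λ, (v ⟶ c) × (c ⟶ (g hns v N).1) :=
  split (g hns v N).2 m (g_bound hns v m N hN)

theorem Q_d1 (m : Fin k → ℕ) (N : ℕ) (hN : ∀ i, m i ≤ N) :
    KGraph.d (k := k) (Q hns v m N hN).2.1 = m :=
  (split_spec (g hns v N).2 m (g_bound hns v m N hN)).1

theorem Q_d2 (m : Fin k → ℕ) (N : ℕ) (hN : ∀ i, m i ≤ N) :
    KGraph.d (k := k) (Q hns v m N hN).2.2 = (fun _ => N) - m := by
  have h := (split_spec (g hns v N).2 m (g_bound hns v m N hN)).2.1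
  rw [g_d] at h
  exact h

theorem Q_comp (m : Fin k → ℕ) (N : ℕ) (hN : ∀ i, m i ≤ N) :
    (Q hns v m N hN).2.1 ≫ (Q hns v m N hN).2.2 = (g hns v N).2 :=
  (split_spec (g hns v N).2 m (g_bound hns v m N hN)).2.2

theorem Q_unique (m : Fin k → ℕ) (N : ℕ) (hN : ∀ i, m i ≤ N)
    (t : Σ c : Λ, (v ⟶ c) × (c ⟶ (g hns v N).1))
    (h1 : KGraph.d (k := k) t.2.1 = m)
    (h2 : KGraph.d (k := k) t.2.2 = (fun _ => N) - m)
    (h3 : t.2.1 ≫ t.2.2 = (g hns v N).2) : t = Q hns v m N hN :=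
  split_unique (g hns v N).2 m (g_bound hns v m N hN) t h1 (by rw [g_d]; exact h2) h3

theorem Q_stab (m : Fin k → ℕ) (N N' : ℕ) (h : N ≤ N')
    (hN : ∀ i, m i ≤ N) (hN' : ∀ i, m i ≤ N') :
    (⟨(Q hns v m N hN).1, (Q hns v m N hN).2.1⟩ : Σ c : Λ, v ⟶ c) =
      ⟨(Q hns v m N' hN').1, (Q hns v m N' hN').2.1⟩ := by
  induction N', h using Nat.le_induction with
  | base => rfl
  | succ N' hle ih =>
    have hmid : ∀ i, m i ≤ N' := fun i => (hN i).trans hle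
    refine (ih hmid).trans ?_
    have ht : KGraph.d (k := k) ((hns (g hns v N').1 (fun _ => 1)).some).2
        = fun _ => 1 := (hns (g hns v N').1 (fun _ => 1)).some_mem
    have key : (⟨(Q hns v m N' hmid).1, (Q hns v m N' hmid).2.1,
        (Q hns v m N' hmid).2.2 ≫ ((hns (g hns v N').1 (fun _ => 1)).some).2⟩ :
        Σ c : Λ, (v ⟶ c) × (c ⟶ (g hns v (N' + 1)).1)) =
        Q hns v m (N' + 1) (fun i => (hN i).trans (Nat.le_succ_of_le hle)) := by
      apply Q_unique
      · exact Q_d1 hns v m N' hmid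
      · show KGraph.d (k := k) (_ ≫ _) = _
        refine (KGraph.d_comp _ _).trans ?_
        refine (congrArg₂ (· + ·) (Q_d2 hns v m N' hmid) ht).trans ?_
        funext i
        have h1 := hmid i
        show (N' - m i) + 1 = (N' + 1) - m i
        omega
      · show (Q hns v m N' hmid).2.1 ≫ ((Q hns v m N' hmid).2.2 ≫ _) = _
        refine (Category.assoc _ _ _).symm.trans ?_
        rw [Q_comp]
        rfl
    exact congrArg (fun t : Σ c : Λ, (v ⟶ c) × (c ⟶ (g hns v (N' + 1)).1) =>
      (⟨t.1, t.2.1⟩ : Σ c : Λ, v ⟶ c)) key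

theorem le_sum (m : Fin k → ℕ) (i : Fin k) : m i ≤ ∑ j, m j :=
  Finset.single_le_sum (fun _ _ => Nat.zero_le _) (Finset.mem_univ i)

/-- The canonical path of degree `m` out of `v`. -/
noncomputable def P (m : Fin k → ℕ) : Σ c : Λ, v ⟶ c :=
  ⟨(Q hns v m (∑ j, m j) (le_sum m)).1, (Q hns v m (∑ j, m j) (le_sum m)).2.1⟩

theorem P_eq (m : Fin k → ℕ) (N : ℕ) (hN : ∀ i, m i ≤ N) :
    P hns v m = ⟨(Q hns v m N hN).1, (Q hns v m N hN).2.1⟩ := by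
  have h1 := Q_stab hns v m (∑ j, m j) (max (∑ j, m j) N)
    (le_max_left _ _) (le_sum m) (fun i => (le_sum m i).trans (le_max_left _ _))
  have h2 := Q_stab hns v m N (max (∑ j, m j) N)
    (le_max_right _ _) hN (fun i => (le_sum m i).trans (le_max_left _ _))
  exact h1.trans h2.symm

theorem P_d (m : Fin k → ℕ) : KGraph.d (k := k) (P hns v m).2 = m :=
  Q_d1 hns v m (∑ j, m j) (le_sum m)

theorem edge_exu (m n : Fin k → ℕ) (h : m ≤ n) :
    ∃! e : (P hns v m).1 ⟶ (P hns v n).1,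
      KGraph.d (k := k) e = n - m ∧ (P hns v m).2 ≫ e = (P hns v n).2 := by
  obtain ⟨N, hNn⟩ : ∃ N : ℕ, ∀ i, n i ≤ N := ⟨∑ j, n j, le_sum n⟩
  have hNm : ∀ i, m i ≤ N := fun i => (h i).trans (hNn i)
  rw [P_eq hns v m N hNm, P_eq hns v n N hNn]
  have hsub : n - m ≤ KGraph.d (k := k) (Q hns v m N hNm).2.2 := by
    rw [Q_d2]
    intro i
    have h1 : m i ≤ n i := h i; have h2 : n i ≤ N := hNn i
    show n i - m i ≤ N - m i
    omega
  have hQmd1 : KGraph.d (k := k) (Q hns v m N hNm).2.1 = m := Q_d1 hns v m N hNm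
  have hSd1 : KGraph.d (k := k) (split (Q hns v m N hNm).2.2 (n - m) hsub).2.1
      = n - m := (split_spec _ _ _).1
  have hdmn : KGraph.d (k := k)
      ((Q hns v m N hNm).2.1 ≫ (split (Q hns v m N hNm).2.2 (n - m) hsub).2.1) = n := by
    rw [KGraph.d_comp, hQmd1, hSd1]
    funext i
    have h1 : m i ≤ n i := h i
    show m i + (n i - m i) = n i
    omega
  have key : (⟨(split (Q hns v m N hNm).2.2 (n - m) hsub).1,
      (Q hns v m N hNm).2.1 ≫ (split (Q hns v m N hNm).2.2 (n - m) hsub).2.1,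
      (split (Q hns v m N hNm).2.2 (n - m) hsub).2.2⟩ :
      Σ c : Λ, (v ⟶ c) × (c ⟶ (g hns v N).1)) = Q hns v n N hNn := by
    apply Q_unique
    · exact hdmn
    · show KGraph.d (k := k) (split (Q hns v m N hNm).2.2 (n - m) hsub).2.2 = _
      rw [(split_spec _ _ _).2.1, Q_d2]
      funext i
      have h1 : m i ≤ n i := h i; have h2 : n i ≤ N := hNn i
      show (N - m i) - (n i - m i) = N - n i
      omega
    · show ((Q hns v m N hNm).2.1 ≫ _) ≫ _ = _
      rw [Category.assoc, (split_spec _ _ _).2.2, Q_comp]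
  rw [← key]
  dsimp only
  refine ⟨(split (Q hns v m N hNm).2.2 (n - m) hsub).2.1, ⟨hSd1, rfl⟩, ?_⟩
  rintro e ⟨hd, hc⟩
  have huniq := (KGraph.factor
      ((Q hns v m N hNm).2.1 ≫ (split (Q hns v m N hNm).2.2 (n - m) hsub).2.1)
      m (n - m)
      (by rw [hdmn]; funext i; have h1 : m i ≤ n i := h i; show n i = m i + (n i - m i); omega)).unique
    (y₁ := ⟨(Q hns v m N hNm).1, (Q hns v m N hNm).2.1, e⟩)
    (y₂ := ⟨(Q hns v m N hNm).1, (Q hns v m N hNm).2.1,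
      (split (Q hns v m N hNm).2.2 (n - m) hsub).2.1⟩)
    ⟨hQmd1, hd, hc⟩ ⟨hQmd1, hSd1, rfl⟩
  exact pair_ext huniq

theorem P_zero : (P hns v 0).1 = v := by
  have key : (⟨v, 𝟙 v, (g hns v (∑ j, (0 : Fin k → ℕ) j)).2⟩ :
      Σ c : Λ, (v ⟶ c) × (c ⟶ (g hns v (∑ j, (0 : Fin k → ℕ) j)).1)) =
      Q hns v 0 (∑ j, (0 : Fin k → ℕ) j) (le_sum 0) := by
    apply Q_unique
    · exact KGraph.d_id v
    · show KGraph.d (k := k) (g hns v _).2 = _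
      rw [g_d]
      funext i; rfl
    · exact Category.id_comp _
  exact (congrArg (fun t : Σ c : Λ,
    (v ⟶ c) × (c ⟶ (g hns v (∑ j, (0 : Fin k → ℕ) j)).1) => t.1) key).symm

end

end KGraphProofAux

/-- In a row-finite `k`-graph with no sources, every vertex `v` emits an infinite
path: `Λ^∞(v) ≠ ∅`.  (Here `Λ^n(v)` is the set of morphisms of degree `n` with
range `v`, i.e. with domain `v` in the categorical picture.) -/
theorem infPath_nonempty
    (k : ℕ) (Λ : Type u) [Category.{v} Λ] [KGraph k Λ]
    (hrowfin : ∀ (v : Λ) (n : Fin k → ℕ),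
      {t : Σ b : Λ, v ⟶ b | KGraph.d (k := k) t.2 = n}.Finite)
    (hnosource : ∀ (v : Λ) (n : Fin k → ℕ),
      {t : Σ b : Λ, v ⟶ b | KGraph.d (k := k) t.2 = n}.Nonempty)
    (v : Λ) :
    ∃ x : InfPath k Λ, x.vert 0 = v := by
  classical
  open KGraphProofAux in
  refine ⟨{
    vert := fun m => (P hnosource v m).1
    edge := fun m n h => (edge_exu hnosource v m n h).exists.choose
    edge_self := fun m => by
      refine ((edge_exu hnosource v m m le_rfl).unique
        (edge_exu hnosource v m m le_rfl).exists.choose_spec ⟨?_, ?_⟩)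
      · rw [KGraph.d_id]; funext i; simp
      · exact Category.comp_id _
    edge_comp := fun m n p h₁ h₂ => by
      have s₁ := (edge_exu hnosource v m n h₁).exists.choose_spec
      have s₂ := (edge_exu hnosource v n p h₂).exists.choose_spec
      refine ((edge_exu hnosource v m p (h₁.trans h₂)).unique ⟨?_, ?_⟩
        (edge_exu hnosource v m p (h₁.trans h₂)).exists.choose_spec)
      · rw [KGraph.d_comp, s₁.1, s₂.1]
        funext i
        have a1 : m i ≤ n i := h₁ i; have a2 : n i ≤ p i := h₂ i
        show (n i - m i) + (p i - n i) = p i - m i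
        omega
      · rw [← Category.assoc, s₁.2, s₂.2]
    deg := fun m n h => (edge_exu hnosource v m n h).exists.choose_spec.1 }, ?_⟩
  exact P_zero hnosource v
end

section
/- Let Λ be a k-graph, λ ∈ Λ and x ∈ Λ^∞ with x(0) = s(λ). Then there is a unique y ∈ Λ^∞ such that x = σ^{d(λ)}(y) and y(0, d(λ)) = λ, where σ^p(x)(m,n) := x(m+p, n+p). -/
open CategoryTheory

universe v u

variable (k : ℕ) (Λ : Type u) [Category.{v} Λ] [KGraph k Λ]

variable {k Λ}

lemma d_eqToHom {a b : Λ} (h : a = b) : KGraph.d (k := k) (eqToHom h) = 0 := by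
  subst h; simpa using KGraph.d_id (k := k) a

lemma triple_eq {a b : Λ} {t t' : Σ c : Λ, (a ⟶ c) × (c ⟶ b)} (h : t = t') :
    ∃ hc : t.1 = t'.1, t.2.1 = t'.2.1 ≫ eqToHom hc.symm ∧ t.2.2 = eqToHom hc ≫ t'.2.2 := by
  subst h; exact ⟨rfl, by simp, by simp⟩

lemma eqToHom_of_d_zero {a b : Λ} (f : a ⟶ b) (hf : KGraph.d (k := k) f = 0) :
    ∃ h : a = b, f = eqToHom h := by
  have hfac := KGraph.factor (k := k) f 0 0 (by simpa using hf)
  have h1 : (⟨a, 𝟙 a, f⟩ : Σ c : Λ, (a ⟶ c) × (c ⟶ b)) = ⟨b, f, 𝟙 b⟩ :=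
    hfac.unique ⟨by simpa using KGraph.d_id (k := k) a, by simpa using hf, by simp⟩
      ⟨by simpa using hf, by simpa using KGraph.d_id (k := k) b, by simp⟩
  obtain ⟨hc, h2, h3⟩ := triple_eq h1
  exact ⟨hc, by simpa using h3⟩

lemma InfPath.edge_congr (x : InfPath k Λ) {m n m' n' : Fin k → ℕ}
    (hm : m = m') (hn : n = n') (h : m ≤ n) :
    x.edge m n h = eqToHom (by rw [hm]) ≫ x.edge m' n' (hm ▸ hn ▸ h) ≫ eqToHom (by rw [hn]) := by
  subst hm; subst hn; simp

lemma InfPath.edge_comp_assoc (x : InfPath k Λ) {z : Λ} (m n q : Fin k → ℕ)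
    (h₁ : m ≤ n) (h₂ : n ≤ q) (f : x.vert q ⟶ z) :
    x.edge m n h₁ ≫ x.edge n q h₂ ≫ f = x.edge m q (h₁.trans h₂) ≫ f := by
  rw [← Category.assoc, x.edge_comp]

lemma InfPath.ext' (x y : InfPath k Λ) (hv : ∀ m, x.vert m = y.vert m)
    (he : ∀ m n (h : m ≤ n),
      x.edge m n h = eqToHom (hv m) ≫ y.edge m n h ≫ eqToHom (hv n).symm) : x = y := by
  obtain ⟨xv, xe, _, _, _⟩ := x
  obtain ⟨yv, ye, _, _, _⟩ := y
  have hv' : xv = yv := funext hv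
  subst hv'
  simp only [eqToHom_refl, Category.comp_id, Category.id_comp] at he
  have : xe = ye := by
    funext m n h
    exact he m n h
  subst this
  rfl

section Construction

variable {a b : Λ} (lam : a ⟶ b) (x : InfPath k Λ) (hx : x.vert 0 = b)

/-- `F m = λ x(0, m ∸ p) : a ⟶ x.vert (m - p)`, of degree `m ⊔ p`. -/
def kgF (m : Fin k → ℕ) : a ⟶ x.vert (m - KGraph.d (k := k) lam) :=
  lam ≫ eqToHom hx.symm ≫ x.edge 0 (m - KGraph.d (k := k) lam) zero_le

lemma kgF_deg (m : Fin k → ℕ) :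
    KGraph.d (k := k) (kgF lam x hx m) = m + (KGraph.d (k := k) lam - m) := by
  simp only [kgF, KGraph.d_comp, d_eqToHom, x.deg]
  funext i
  simp only [Pi.add_apply, Pi.sub_apply, Pi.zero_apply]
  omega

noncomputable def kgT (m : Fin k → ℕ) :
    Σ c : Λ, (a ⟶ c) × (c ⟶ x.vert (m - KGraph.d (k := k) lam)) :=
  (KGraph.factor (kgF lam x hx m) m _ (kgF_deg lam x hx m)).exists.choose

noncomputable def kgC (m : Fin k → ℕ) : Λ := (kgT lam x hx m).1
noncomputable def kgG (m : Fin k → ℕ) : a ⟶ kgC lam x hx m := (kgT lam x hx m).2.1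
noncomputable def kgH (m : Fin k → ℕ) :
    kgC lam x hx m ⟶ x.vert (m - KGraph.d (k := k) lam) := (kgT lam x hx m).2.2

lemma kgG_deg (m : Fin k → ℕ) : KGraph.d (k := k) (kgG lam x hx m) = m :=
  (KGraph.factor (kgF lam x hx m) m _ (kgF_deg lam x hx m)).exists.choose_spec.1

lemma kgH_deg (m : Fin k → ℕ) :
    KGraph.d (k := k) (kgH lam x hx m) = KGraph.d (k := k) lam - m :=
  (KGraph.factor (kgF lam x hx m) m _ (kgF_deg lam x hx m)).exists.choose_spec.2.1

lemma kgGH (m : Fin k → ℕ) : kgG lam x hx m ≫ kgH lam x hx m = kgF lam x hx m :=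
  (KGraph.factor (kgF lam x hx m) m _ (kgF_deg lam x hx m)).exists.choose_spec.2.2

lemma kgT_unique (m : Fin k → ℕ)
    (t : Σ c : Λ, (a ⟶ c) × (c ⟶ x.vert (m - KGraph.d (k := k) lam)))
    (ht : KGraph.d (k := k) t.2.1 = m ∧
      KGraph.d (k := k) t.2.2 = KGraph.d (k := k) lam - m ∧ t.2.1 ≫ t.2.2 = kgF lam x hx m) :
    t = kgT lam x hx m :=
  (KGraph.factor (kgF lam x hx m) m _ (kgF_deg lam x hx m)).unique ht
    ⟨kgG_deg lam x hx m, kgH_deg lam x hx m, kgGH lam x hx m⟩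

end Construction

section Construction2

variable {a b : Λ} (lam : a ⟶ b) (x : InfPath k Λ) (hx : x.vert 0 = b)

lemma kgEdge_exu (m n : Fin k → ℕ) (h : m ≤ n) :
    ∃! e : kgC lam x hx m ⟶ kgC lam x hx n,
      KGraph.d (k := k) e = n - m ∧ kgG lam x hx m ≫ e = kgG lam x hx n := by
  have hmp : m - KGraph.d (k := k) lam ≤ n - KGraph.d (k := k) lam :=
    tsub_le_tsub_right h _
  have hGn : KGraph.d (k := k) (kgG lam x hx n) = m + (n - m) := by
    rw [kgG_deg]; funext i
    have hi : m i ≤ n i := h i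
    simp only [Pi.add_apply, Pi.sub_apply]; omega
  have uniqP : ∀ (e₁ e₂ : kgC lam x hx m ⟶ kgC lam x hx n),
      (KGraph.d (k := k) e₁ = n - m ∧ kgG lam x hx m ≫ e₁ = kgG lam x hx n) →
      (KGraph.d (k := k) e₂ = n - m ∧ kgG lam x hx m ≫ e₂ = kgG lam x hx n) →
      e₁ = e₂ := by
    intro e₁ e₂ ⟨hd₁, hc₁⟩ ⟨hd₂, hc₂⟩
    have heq := (KGraph.factor (kgG lam x hx n) m (n - m) hGn).unique
      (y₁ := ⟨kgC lam x hx m, kgG lam x hx m, e₁⟩)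
      (y₂ := ⟨kgC lam x hx m, kgG lam x hx m, e₂⟩)
      ⟨kgG_deg lam x hx m, hd₁, hc₁⟩ ⟨kgG_deg lam x hx m, hd₂, hc₂⟩
    obtain ⟨hc0, _, h2'⟩ := triple_eq heq
    have h2'' : e₁ = eqToHom hc0 ≫ e₂ := h2'
    rw [h2'', show eqToHom hc0 = 𝟙 _ from rfl, Category.id_comp]
  -- existence
  obtain ⟨t, ⟨htd1, htd2, htc⟩⟩ := (KGraph.factor (kgG lam x hx n) m (n - m) hGn).exists
  have hsplit : KGraph.d (k := k) (kgF lam x hx n) =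
      m + ((n - m) + (KGraph.d (k := k) lam - n)) := by
    rw [kgF_deg]; funext i
    have hi : m i ≤ n i := h i
    simp only [Pi.add_apply, Pi.sub_apply]; omega
  have key : (⟨t.1, t.2.1, t.2.2 ≫ kgH lam x hx n⟩ :
        Σ c : Λ, (a ⟶ c) × (c ⟶ x.vert (n - KGraph.d (k := k) lam))) =
      ⟨kgC lam x hx m, kgG lam x hx m,
        kgH lam x hx m ≫ x.edge (m - KGraph.d (k := k) lam)
          (n - KGraph.d (k := k) lam) hmp⟩ := by
    refine (KGraph.factor (kgF lam x hx n) m ((n - m) + (KGraph.d (k := k) lam - n))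
      hsplit).unique ⟨htd1, ?_, ?_⟩ ⟨kgG_deg lam x hx m, ?_, ?_⟩
    · rw [KGraph.d_comp, htd2, kgH_deg]
    · show t.2.1 ≫ t.2.2 ≫ kgH lam x hx n = _
      rw [← Category.assoc, htc, kgGH]
    · show KGraph.d (k := k) (kgH lam x hx m ≫ x.edge _ _ hmp) = _
      rw [KGraph.d_comp, kgH_deg, x.deg]
      funext i
      have hi : m i ≤ n i := h i
      simp only [Pi.add_apply, Pi.sub_apply]; omega
    · show kgG lam x hx m ≫ kgH lam x hx m ≫ x.edge _ _ hmp = _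
      rw [← Category.assoc, kgGH]
      simp only [kgF, Category.assoc, x.edge_comp]
  obtain ⟨hc, h1, h2⟩ := triple_eq key
  have h1' : t.2.1 = kgG lam x hx m ≫ eqToHom hc.symm := h1
  refine ⟨eqToHom hc.symm ≫ t.2.2, ⟨?_, ?_⟩, fun e' he' => uniqP e' _ he' ⟨?_, ?_⟩⟩
  · rw [KGraph.d_comp, d_eqToHom, htd2, zero_add]
  · rw [← Category.assoc, ← h1', htc]
  · rw [KGraph.d_comp, d_eqToHom, htd2, zero_add]
  · rw [← Category.assoc, ← h1', htc]

end Construction2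

section Construction3

variable {a b : Λ} (lam : a ⟶ b) (x : InfPath k Λ) (hx : x.vert 0 = b)

noncomputable def kgY : InfPath k Λ where
  vert m := kgC lam x hx m
  edge m n h := (kgEdge_exu lam x hx m n h).exists.choose
  edge_self m := by
    refine ((kgEdge_exu lam x hx m m le_rfl).unique
      (kgEdge_exu lam x hx m m le_rfl).exists.choose_spec ⟨?_, ?_⟩)
    · have hid : KGraph.d (k := k) (𝟙 (kgC lam x hx m)) = 0 := KGraph.d_id _
      rw [hid]; funext i; simp
    · simp
  edge_comp m n q h₁ h₂ := by
    refine ((kgEdge_exu lam x hx m q (h₁.trans h₂)).unique ⟨?_, ?_⟩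
      (kgEdge_exu lam x hx m q (h₁.trans h₂)).exists.choose_spec)
    · rw [KGraph.d_comp,
        (kgEdge_exu lam x hx m n h₁).exists.choose_spec.1,
        (kgEdge_exu lam x hx n q h₂).exists.choose_spec.1]
      funext i
      have hi1 : m i ≤ n i := h₁ i
      have hi2 : n i ≤ q i := h₂ i
      simp only [Pi.add_apply, Pi.sub_apply]; omega
    · rw [← Category.assoc,
        (kgEdge_exu lam x hx m n h₁).exists.choose_spec.2,
        (kgEdge_exu lam x hx n q h₂).exists.choose_spec.2]
  deg m n h := (kgEdge_exu lam x hx m n h).exists.choose_spec.1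

lemma kgY_edge_deg (m n : Fin k → ℕ) (h : m ≤ n) :
    KGraph.d (k := k) ((kgY lam x hx).edge m n h) = n - m :=
  (kgEdge_exu lam x hx m n h).exists.choose_spec.1

lemma kgY_edge_comp (m n : Fin k → ℕ) (h : m ≤ n) :
    kgG lam x hx m ≫ (kgY lam x hx).edge m n h = kgG lam x hx n :=
  (kgEdge_exu lam x hx m n h).exists.choose_spec.2

lemma kgY_edge_unique (m n : Fin k → ℕ) (h : m ≤ n)
    (e : kgC lam x hx m ⟶ kgC lam x hx n)
    (hd : KGraph.d (k := k) e = n - m)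
    (hcmp : kgG lam x hx m ≫ e = kgG lam x hx n) :
    e = (kgY lam x hx).edge m n h :=
  (kgEdge_exu lam x hx m n h).unique ⟨hd, hcmp⟩
    ⟨kgY_edge_deg lam x hx m n h, kgY_edge_comp lam x hx m n h⟩

/-- When `p ≤ m`, the vertex `C m` is `x.vert (m - p)` and `H m` is an `eqToHom`. -/
lemma kgC_eq (m : Fin k → ℕ) (hm : KGraph.d (k := k) lam ≤ m) :
    ∃ hh : kgC lam x hx m = x.vert (m - KGraph.d (k := k) lam),
      kgH lam x hx m = eqToHom hh := by
  have hz : KGraph.d (k := k) (kgH lam x hx m) = 0 := by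
    rw [kgH_deg lam x hx m]
    funext i
    have hi : KGraph.d (k := k) lam i ≤ m i := hm i
    simp only [Pi.sub_apply, Pi.zero_apply]; omega
  exact eqToHom_of_d_zero _ hz

lemma kgG_eq (m : Fin k → ℕ)
    (hh : kgC lam x hx m = x.vert (m - KGraph.d (k := k) lam))
    (hH : kgH lam x hx m = eqToHom hh) :
    kgG lam x hx m = kgF lam x hx m ≫ eqToHom hh.symm := by
  rw [← kgGH lam x hx m, hH]
  simp

lemma kgG_zero : ∃ hh : a = kgC lam x hx 0, kgG lam x hx 0 = eqToHom hh := by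
  exact eqToHom_of_d_zero _ (kgG_deg lam x hx 0)

end Construction3

section Construction4

variable {a b : Λ} (lam : a ⟶ b) (x : InfPath k Λ) (hx : x.vert 0 = b)

lemma kgY_vert_shift (m : Fin k → ℕ) :
    kgC lam x hx (m + KGraph.d (k := k) lam) = x.vert m := by
  obtain ⟨hh, _⟩ := kgC_eq lam x hx (m + KGraph.d (k := k) lam) le_add_self
  refine hh.trans (congrArg x.vert ?_)
  funext i; simp

lemma kgY_shift : (kgY lam x hx).shift (KGraph.d (k := k) lam) = x := by
  refine InfPath.ext' _ _ (fun m => kgY_vert_shift lam x hx m) ?_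
  intro m n h
  have hmm : m + KGraph.d (k := k) lam - KGraph.d (k := k) lam = m := by funext i; simp
  have hnn : n + KGraph.d (k := k) lam - KGraph.d (k := k) lam = n := by funext i; simp
  obtain ⟨hhm, hHm⟩ := kgC_eq lam x hx (m + KGraph.d (k := k) lam) le_add_self
  obtain ⟨hhn, hHn⟩ := kgC_eq lam x hx (n + KGraph.d (k := k) lam) le_add_self
  refine ((kgY_edge_unique lam x hx _ _ (add_le_add h le_rfl)
    (eqToHom (kgY_vert_shift lam x hx m) ≫ x.edge m n h ≫
      eqToHom (kgY_vert_shift lam x hx n).symm) ?_ ?_)).symm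
  · simp only [KGraph.d_comp, d_eqToHom, x.deg]
    funext i
    simp only [Pi.add_apply, Pi.sub_apply, Pi.zero_apply]
    omega
  · rw [kgG_eq lam x hx _ hhm hHm, kgG_eq lam x hx _ hhn hHn]
    simp only [kgF, Category.assoc, eqToHom_trans]
    rw [x.edge_congr rfl hmm zero_le, x.edge_congr rfl hnn zero_le]
    simp only [Category.assoc, eqToHom_trans, eqToHom_refl, Category.id_comp,
      x.edge_comp_assoc, eqToHom_trans_assoc]

end Construction4

section Construction5

variable {a b : Λ} (lam : a ⟶ b) (x : InfPath k Λ) (hx : x.vert 0 = b)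

lemma kgY_vert_zero : (kgY lam x hx).vert 0 = a := (kgG_zero lam x hx).choose.symm

lemma kgY_vert_d : (kgY lam x hx).vert (KGraph.d (k := k) lam) = b := by
  obtain ⟨hh, _⟩ := kgC_eq lam x hx (KGraph.d (k := k) lam) le_rfl
  refine hh.trans ?_
  have hz : KGraph.d (k := k) lam - KGraph.d (k := k) lam = 0 := by funext i; simp
  rw [hz, hx]

lemma kgY_edge_lam :
    (kgY lam x hx).edge 0 (KGraph.d (k := k) lam) zero_le =
      eqToHom (kgY_vert_zero lam x hx) ≫ lam ≫ eqToHom (kgY_vert_d lam x hx).symm := by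
  have hz : KGraph.d (k := k) lam - KGraph.d (k := k) lam = 0 := by funext i; simp
  obtain ⟨hh, hH⟩ := kgC_eq lam x hx (KGraph.d (k := k) lam) le_rfl
  refine ((kgY_edge_unique lam x hx 0 (KGraph.d (k := k) lam) zero_le _ ?_ ?_)).symm
  · show KGraph.d (k := k) (eqToHom (kgY_vert_zero lam x hx) ≫ lam ≫
      eqToHom (kgY_vert_d lam x hx).symm) = _
    simp only [KGraph.d_comp, d_eqToHom]
    funext i; simp
  · rw [(kgG_zero lam x hx).choose_spec, kgG_eq lam x hx _ hh hH]
    simp only [kgF, Category.assoc, eqToHom_trans, eqToHom_trans_assoc]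
    rw [x.edge_congr rfl hz zero_le]
    simp only [x.edge_self, Category.assoc, Category.id_comp, eqToHom_trans,
      eqToHom_refl, Category.comp_id, eqToHom_trans_assoc]
    exact (eqToHom_trans_assoc _ _ _).trans (Category.id_comp _)

end Construction5

section Construction6

variable {a b : Λ} (lam : a ⟶ b) (x : InfPath k Λ) (hx : x.vert 0 = b)

lemma kgY_unique (y' : InfPath k Λ)
    (hs : y'.shift (KGraph.d (k := k) lam) = x)
    (h0 : y'.vert 0 = a) (h1 : y'.vert (KGraph.d (k := k) lam) = b)
    (hedge : y'.edge 0 (KGraph.d (k := k) lam) zero_le =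
      eqToHom h0 ≫ lam ≫ eqToHom h1.symm) :
    y' = kgY lam x hx := by
  subst hs
  have key : ∀ m : Fin k → ℕ,
      ∃ hvm : y'.vert m = kgC lam (y'.shift (KGraph.d (k := k) lam)) hx m,
        eqToHom h0.symm ≫ y'.edge 0 m zero_le =
          kgG lam (y'.shift (KGraph.d (k := k) lam)) hx m ≫ eqToHom hvm.symm := by
    intro m
    have hle1 : m ≤ (m - KGraph.d (k := k) lam) + KGraph.d (k := k) lam :=
      Pi.le_def.mpr fun i => by simp only [Pi.add_apply, Pi.sub_apply]; omega
    have h0p : (0 : Fin k → ℕ) + KGraph.d (k := k) lam = KGraph.d (k := k) lam := by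
      funext i; simp
    have htrip := kgT_unique lam (y'.shift (KGraph.d (k := k) lam)) hx m
      ⟨y'.vert m, eqToHom h0.symm ≫ y'.edge 0 m zero_le,
        y'.edge m ((m - KGraph.d (k := k) lam) + KGraph.d (k := k) lam) hle1⟩
      ⟨by
        rw [KGraph.d_comp, d_eqToHom, y'.deg]
        funext i
        simp only [Pi.add_apply, Pi.sub_apply, Pi.zero_apply]; omega,
       by
        show KGraph.d (k := k) (y'.edge _ _ hle1) = _
        rw [y'.deg]
        funext i
        simp only [Pi.add_apply, Pi.sub_apply]; omega,
       by
        show (eqToHom h0.symm ≫ y'.edge 0 m zero_le) ≫ y'.edge _ _ hle1 =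
          kgF lam (y'.shift (KGraph.d (k := k) lam)) hx m
        rw [Category.assoc, y'.edge_comp,
          ← y'.edge_comp 0 (KGraph.d (k := k) lam) _ zero_le le_add_self, hedge]
        simp only [kgF, InfPath.shift, Category.assoc, eqToHom_trans_assoc,
          eqToHom_trans, eqToHom_refl, Category.id_comp]
        rw [y'.edge_congr h0p rfl]
        simp only [Category.assoc, eqToHom_trans_assoc, eqToHom_refl,
          Category.id_comp, Category.comp_id, eqToHom_trans]
        exact congrArg (lam ≫ ·) (eqToHom_trans_assoc _ _ _).symm⟩
    obtain ⟨hc, hG, _⟩ := triple_eq htrip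
    have hG' : eqToHom h0.symm ≫ y'.edge 0 m zero_le =
        kgG lam (y'.shift (KGraph.d (k := k) lam)) hx m ≫ eqToHom hc.symm := hG
    exact ⟨hc, hG'⟩
  refine InfPath.ext' _ _ (fun m => (key m).choose) ?_
  intro m n h
  obtain ⟨hvm, hGm⟩ := key m
  obtain ⟨hvn, hGn⟩ := key n
  have he := kgY_edge_unique lam (y'.shift (KGraph.d (k := k) lam)) hx m n h
    (eqToHom hvm.symm ≫ y'.edge m n h ≫ eqToHom hvn)
    (by
      rw [KGraph.d_comp, KGraph.d_comp, d_eqToHom, d_eqToHom, y'.deg]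
      funext i
      simp only [Pi.add_apply, Pi.sub_apply, Pi.zero_apply]; omega)
    (by
      rw [← Category.assoc, ← hGm, Category.assoc, y'.edge_comp_assoc,
        ← Category.assoc, hGn, Category.assoc, eqToHom_trans, eqToHom_refl,
        Category.comp_id])
  rw [← he]
  change y'.edge m n h = eqToHom hvm ≫ (eqToHom hvm.symm ≫ y'.edge m n h ≫ eqToHom hvn) ≫
    eqToHom hvn.symm
  simp only [Category.assoc, eqToHom_trans, eqToHom_refl, Category.comp_id,
    eqToHom_trans_assoc, Category.id_comp]

end Construction6

/-- Factorisation of infinite paths: given `λ ∈ Λ` and `x ∈ Λ^∞` with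
`x(0) = s(λ)`, there is a unique `y ∈ Λ^∞` with `σ^{d(λ)} y = x` and
`y(0, d(λ)) = λ`. -/
theorem infPath_factorisation
    (k : ℕ) (Λ : Type u) [Category.{v} Λ] [KGraph k Λ]
    {a b : Λ} (lam : a ⟶ b) (x : InfPath k Λ) (hx : x.vert 0 = b) :
    ∃! y : InfPath k Λ, y.shift (KGraph.d (k := k) lam) = x ∧
      ∃ (h0 : y.vert 0 = a) (h1 : y.vert (KGraph.d (k := k) lam) = b),
        y.edge 0 (KGraph.d (k := k) lam) zero_le =
          eqToHom h0 ≫ lam ≫ eqToHom h1.symm := by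
  refine ⟨kgY lam x hx, ⟨kgY_shift lam x hx, kgY_vert_zero lam x hx,
    kgY_vert_d lam x hx, kgY_edge_lam lam x hx⟩, ?_⟩
  rintro y' ⟨hs, h0, h1, hedge⟩
  exact kgY_unique lam x hx y' hs h0 h1 hedge
end

section
/- Let Λ be a row-finite k-graph with no sources. In the topology on Λ^∞ generated by the cylinder sets Z(λ), each Z(λ) is compact; consequently Λ^∞ is compact if and only if Λ^0 is finite. -/
open CategoryTheory

universe v u

variable (k : ℕ) (Λ : Type u) [Category.{v} Λ] [KGraph k Λ]

variable {k Λ}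

/-- The cylinder set `Z(λ) = {x ∈ Λ^∞ : x(0, d λ) = λ}` of a morphism `λ : a ⟶ b`. -/
def Zset {k : ℕ} {Λ : Type u} [Category.{v} Λ] [KGraph k Λ] {a b : Λ} (f : a ⟶ b) :
    Set (InfPath k Λ) :=
  {x | ∃ (h0 : x.vert 0 = a) (h1 : x.vert (KGraph.d (k := k) f) = b),
    x.edge 0 (KGraph.d (k := k) f) zero_le = eqToHom h0 ≫ f ≫ eqToHom h1.symm}

/-- The cylinder-set topology on the infinite path space `Λ^∞`. -/
def pathTopology (k : ℕ) (Λ : Type u) [Category.{v} Λ] [KGraph k Λ] :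
    TopologicalSpace (InfPath k Λ) :=
  TopologicalSpace.generateFrom {S | ∃ (a b : Λ) (f : a ⟶ b), S = Zset f}

/-! ### Auxiliary lemmas -/

section Aux

variable {k : ℕ} {Λ : Type u} [Category.{v} Λ] [KGraph k Λ]

/-- Left cancellation in a `k`-graph. -/
lemma kg_cancel_left {k : ℕ} {Λ : Type u} [Category.{v} Λ] [KGraph k Λ] {a c b : Λ} (g : a ⟶ c) {h h' : c ⟶ b}
    (e : g ≫ h = g ≫ h') : h = h' := by
  have hd : KGraph.d (k := k) h = KGraph.d (k := k) h' := by
    have := congrArg (KGraph.d (k := k)) e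
    rw [KGraph.d_comp, KGraph.d_comp] at this
    exact add_left_cancel this
  obtain ⟨t, ht, hu⟩ := KGraph.factor (g ≫ h) (KGraph.d (k := k) g) (KGraph.d (k := k) h)
    (KGraph.d_comp g h)
  have e1 := hu ⟨c, g, h⟩ ⟨rfl, rfl, rfl⟩
  have e2 := hu ⟨c, g, h'⟩ ⟨rfl, hd.symm, e.symm⟩
  have e3 := e1.trans e2.symm
  injection e3 with h1 h2
  exact congrArg Prod.snd h2

/-- A degree-zero morphism is an identity. -/
lemma kg_deg_zero {a c : Λ} (g : a ⟶ c) (h : KGraph.d (k := k) g = 0) :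
    (⟨c, g⟩ : Σ w : Λ, a ⟶ w) = ⟨a, 𝟙 a⟩ := by
  obtain ⟨t, ht, hu⟩ := KGraph.factor g 0 0 (by simpa using h)
  have e1 := hu ⟨a, 𝟙 a, g⟩ ⟨KGraph.d_id a, h, Category.id_comp g⟩
  have e2 := hu ⟨c, g, 𝟙 c⟩ ⟨h, KGraph.d_id c, Category.comp_id g⟩
  exact (congrArg
    (fun t : Σ w : Λ, (a ⟶ w) × (w ⟶ c) => (⟨t.1, t.2.1⟩ : Σ w : Λ, a ⟶ w))
    (e1.trans e2.symm)).symm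

lemma pair_eq_elim {a : Λ} {t : Σ w : Λ, a ⟶ w} {c : Λ} {g : a ⟶ c} (e : t = ⟨c, g⟩) :
    ∃ h : t.1 = c, t.2 = g ≫ eqToHom h.symm := by
  subst e; exact ⟨rfl, by simp⟩

lemma kg_d_eqToHom {a c : Λ} (h : a = c) : KGraph.d (k := k) (eqToHom h) = 0 := by
  subst h
  simpa using KGraph.d_id (k := k) a

lemma pair_eq_intro {a c c' : Λ} (h : c = c') (g : a ⟶ c') :
    (⟨c, g ≫ eqToHom h.symm⟩ : Σ w : Λ, a ⟶ w) = ⟨c', g⟩ := by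
  subst h; simp

/-- The chosen factorisation of `f` at degree `m ≤ d f`. -/
lemma kgFac_aux {a c : Λ} (f : a ⟶ c) (m : Fin k → ℕ)
    (hm : m ≤ KGraph.d (k := k) f) :
    KGraph.d (k := k) f = m + (KGraph.d (k := k) f - m) := by
  funext i
  have h5 : m i ≤ KGraph.d (k := k) f i := hm i
  simp only [Pi.add_apply, Pi.sub_apply]
  omega

noncomputable def kgFac {a c : Λ} (f : a ⟶ c) (m : Fin k → ℕ)
    (hm : m ≤ KGraph.d (k := k) f) : Σ w : Λ, (a ⟶ w) × (w ⟶ c) :=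
  (KGraph.factor f m (KGraph.d (k := k) f - m) (kgFac_aux f m hm)).choose

lemma kgFac_spec {a c : Λ} (f : a ⟶ c) (m : Fin k → ℕ) (hm : m ≤ KGraph.d (k := k) f) :
    KGraph.d (k := k) (kgFac f m hm).2.1 = m ∧
      KGraph.d (k := k) (kgFac f m hm).2.2 = KGraph.d (k := k) f - m ∧
      (kgFac f m hm).2.1 ≫ (kgFac f m hm).2.2 = f :=
  (KGraph.factor f m (KGraph.d (k := k) f - m) (kgFac_aux f m hm)).choose_spec.1

lemma kgFac_unique {a c : Λ} (f : a ⟶ c) (m : Fin k → ℕ) (hm : m ≤ KGraph.d (k := k) f)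
    (y : Σ w : Λ, (a ⟶ w) × (w ⟶ c))
    (hy : KGraph.d (k := k) y.2.1 = m ∧
      KGraph.d (k := k) y.2.2 = KGraph.d (k := k) f - m ∧ y.2.1 ≫ y.2.2 = f) :
    y = kgFac f m hm :=
  (KGraph.factor f m (KGraph.d (k := k) f - m) (kgFac_aux f m hm)).choose_spec.2 y hy

/-- The initial segment of degree `m` of a morphism `f`. -/
noncomputable def kgIni {a c : Λ} (f : a ⟶ c) (m : Fin k → ℕ)
    (hm : m ≤ KGraph.d (k := k) f) : Σ w : Λ, a ⟶ w :=
  ⟨(kgFac f m hm).1, (kgFac f m hm).2.1⟩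

lemma kgIni_deg {a c : Λ} (f : a ⟶ c) (m : Fin k → ℕ) (hm : m ≤ KGraph.d (k := k) f) :
    KGraph.d (k := k) (kgIni f m hm).2 = m :=
  (kgFac_spec f m hm).1

lemma kgIni_res {a c : Λ} (f : a ⟶ c) (m : Fin k → ℕ) (hm : m ≤ KGraph.d (k := k) f) :
    ∃ h : (kgIni f m hm).1 ⟶ c, (kgIni f m hm).2 ≫ h = f :=
  ⟨(kgFac f m hm).2.2, (kgFac_spec f m hm).2.2⟩

lemma kgIni_unique {a c c' : Λ} {f : a ⟶ c} {m : Fin k → ℕ} (hm : m ≤ KGraph.d (k := k) f)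
    (g : a ⟶ c') (h : c' ⟶ c) (hg : KGraph.d (k := k) g = m) (hgh : g ≫ h = f) :
    (⟨c', g⟩ : Σ w : Λ, a ⟶ w) = kgIni f m hm := by
  have hh : KGraph.d (k := k) h = KGraph.d (k := k) f - m := by
    have h2 := congrArg (KGraph.d (k := k)) hgh
    rw [KGraph.d_comp, hg] at h2
    funext i
    have h3 := congrFun h2 i
    simp only [Pi.add_apply] at h3
    simp only [Pi.sub_apply]
    omega
  have h4 := kgFac_unique f m hm ⟨c', (g, h)⟩ ⟨hg, hh, hgh⟩
  exact congrArg
    (fun t : Σ w : Λ, (a ⟶ w) × (w ⟶ c) => (⟨t.1, t.2.1⟩ : Σ w : Λ, a ⟶ w)) h4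

lemma kgIni_trans {a w c : Λ} {g : a ⟶ w} {h : w ⟶ c} {f : a ⟶ c} (e : g ≫ h = f)
    (m : Fin k → ℕ) (hm : m ≤ KGraph.d (k := k) g) (hm' : m ≤ KGraph.d (k := k) f) :
    kgIni f m hm' = kgIni g m hm := by
  obtain ⟨r, hr⟩ := kgIni_res g m hm
  exact (kgIni_unique hm' (kgIni g m hm).2 (r ≫ h) (kgIni_deg g m hm)
    (by rw [← Category.assoc, hr, e])).symm

/-- Reconstruction of an infinite path from a compatible family of finite paths. -/
noncomputable def kgRec (a : Λ) (p : ∀ _ : Fin k → ℕ, Σ c : Λ, a ⟶ c)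
    (hd : ∀ n, KGraph.d (k := k) (p n).2 = n)
    (hc : ∀ m n, m ≤ n → ∃ g : (p m).1 ⟶ (p n).1, (p m).2 ≫ g = (p n).2) :
    InfPath k Λ where
  vert n := (p n).1
  edge m n h := (hc m n h).choose
  edge_self m := kg_cancel_left (k := k) (p m).2
    (by rw [(hc m m le_rfl).choose_spec, Category.comp_id])
  edge_comp m n q h₁ h₂ := kg_cancel_left (k := k) (p m).2 (by
    rw [← Category.assoc, (hc m n h₁).choose_spec, (hc n q h₂).choose_spec,
      (hc m q (h₁.trans h₂)).choose_spec])
  deg m n h := by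
    have h2 := congrArg (KGraph.d (k := k)) (hc m n h).choose_spec
    rw [KGraph.d_comp, hd, hd] at h2
    funext i
    have h3 := congrFun h2 i
    simp only [Pi.add_apply] at h3
    simp only [Pi.sub_apply]
    omega

lemma kgRec_vert (a : Λ) (p : ∀ _ : Fin k → ℕ, Σ c : Λ, a ⟶ c)
    (hd : ∀ n, KGraph.d (k := k) (p n).2 = n)
    (hc : ∀ m n, m ≤ n → ∃ g : (p m).1 ⟶ (p n).1, (p m).2 ≫ g = (p n).2)
    (n : Fin k → ℕ) :
    (kgRec a p hd hc).vert n = (p n).1 := rfl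

lemma kgRec_spec (a : Λ) (p : ∀ _ : Fin k → ℕ, Σ c : Λ, a ⟶ c)
    (hd : ∀ n, KGraph.d (k := k) (p n).2 = n)
    (hc : ∀ m n, m ≤ n → ∃ g : (p m).1 ⟶ (p n).1, (p m).2 ≫ g = (p n).2)
    (m n : Fin k → ℕ) (h : m ≤ n) :
    (p m).2 ≫ (kgRec a p hd hc).edge m n h = (p n).2 :=
  (hc m n h).choose_spec

lemma kgRec_edge_eq (a : Λ) (p : ∀ _ : Fin k → ℕ, Σ c : Λ, a ⟶ c)
    (hd : ∀ n, KGraph.d (k := k) (p n).2 = n)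
    (hc : ∀ m n, m ≤ n → ∃ g : (p m).1 ⟶ (p n).1, (p m).2 ≫ g = (p n).2)
    (m n : Fin k → ℕ) (h : m ≤ n) {g : (p m).1 ⟶ (p n).1}
    (hg : (p m).2 ≫ g = (p n).2) :
    (kgRec a p hd hc).edge m n h = g :=
  kg_cancel_left (k := k) (p m).2 ((hc m n h).choose_spec.trans hg.symm)

lemma infPath_ext {x y : InfPath k Λ} (hv : ∀ n, x.vert n = y.vert n)
    (he : ∀ m n (h : m ≤ n),
      x.edge m n h ≫ eqToHom (hv n) = eqToHom (hv m) ≫ y.edge m n h) :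
    x = y := by
  obtain ⟨xv, xe, xs, xc, xd⟩ := x
  obtain ⟨yv, ye, ys, yc, yd⟩ := y
  obtain rfl : xv = yv := funext hv
  obtain rfl : xe = ye := by
    funext m n h
    have h2 := he m n h
    simpa using h2
  rfl

lemma edge_deg_zero (x : InfPath k Λ) (n : Fin k → ℕ) (hn : n = 0) :
    x.edge 0 n zero_le = eqToHom (congrArg x.vert hn.symm) := by
  subst hn
  rw [show x.edge 0 0 zero_le = 𝟙 _ from x.edge_self 0]
  simp

lemma mem_Zset_id (x : InfPath k Λ) : x ∈ Zset (𝟙 (x.vert 0)) := by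
  have hd : KGraph.d (k := k) (𝟙 (x.vert 0)) = 0 := KGraph.d_id _
  refine ⟨rfl, congrArg x.vert hd, ?_⟩
  rw [edge_deg_zero x _ hd]
  simp only [eqToHom_refl, Category.id_comp]

/-- In a `k`-graph with no sources, every vertex receives an infinite path. -/
lemma exists_path
    (hnosource : ∀ (v : Λ) (n : Fin k → ℕ),
      {t : Σ b : Λ, v ⟶ b | KGraph.d (k := k) t.2 = n}.Nonempty)
    (v : Λ) : ∃ x : InfPath k Λ, x.vert 0 = v := by
  classical
  choose e he using fun w : Λ => hnosource w 1
  let T : ℕ → Σ c : Λ, v ⟶ c :=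
    fun N => Nat.rec ⟨v, 𝟙 v⟩ (fun _ t => ⟨(e t.1).1, t.2 ≫ (e t.1).2⟩) N
  have hTdeg : ∀ N, KGraph.d (k := k) (T N).2 = fun _ => N := by
    intro N
    induction N with
    | zero =>
      show KGraph.d (k := k) (𝟙 v) = _
      rw [KGraph.d_id]; rfl
    | succ N ih =>
      show KGraph.d (k := k) ((T N).2 ≫ (e (T N).1).2) = _
      rw [KGraph.d_comp, ih, he]
      funext i
      simp [Pi.add_apply]
  have hTchain : ∀ N M, N ≤ M → ∃ h : (T N).1 ⟶ (T M).1, (T N).2 ≫ h = (T M).2 := by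
    intro N M hNM
    induction M with
    | zero =>
      obtain rfl : N = 0 := Nat.le_zero.mp hNM
      exact ⟨𝟙 _, Category.comp_id _⟩
    | succ M ih =>
      rcases Nat.eq_or_lt_of_le hNM with rfl | hlt
      · exact ⟨𝟙 _, Category.comp_id _⟩
      · obtain ⟨h, hh⟩ := ih (Nat.lt_succ_iff.mp hlt)
        exact ⟨h ≫ (e (T M).1).2, by rw [← Category.assoc, hh]⟩
  have hNof : ∀ n : Fin k → ℕ, n ≤ fun _ => Finset.univ.sup n :=
    fun n i => Finset.le_sup (Finset.mem_univ i)
  have hle : ∀ (n : Fin k → ℕ) (N : ℕ), (n ≤ fun _ => N) →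
      n ≤ KGraph.d (k := k) (T N).2 := by
    intro n N h
    rw [hTdeg]
    exact h
  let p : ∀ _ : Fin k → ℕ, Σ c : Λ, v ⟶ c :=
    fun n => kgIni (T (Finset.univ.sup n)).2 n (hle n _ (hNof n))
  have hwd : ∀ (n : Fin k → ℕ) (N : ℕ) (hN : n ≤ fun _ => N),
      p n = kgIni (T N).2 n (hle n N hN) := by
    intro n N hN
    obtain ⟨h1, hh1⟩ := hTchain (Finset.univ.sup n) (max (Finset.univ.sup n) N)
      (le_max_left _ _)
    obtain ⟨h2, hh2⟩ := hTchain N (max (Finset.univ.sup n) N) (le_max_right _ _)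
    have hM : n ≤ KGraph.d (k := k) (T (max (Finset.univ.sup n) N)).2 := by
      rw [hTdeg]
      intro i
      exact le_trans (hNof n i) (le_max_left _ _)
    have e1 := kgIni_trans hh1 n (hle n _ (hNof n)) hM
    have e2 := kgIni_trans hh2 n (hle n N hN) hM
    exact e1.symm.trans e2
  have hd : ∀ n, KGraph.d (k := k) (p n).2 = n := fun n => kgIni_deg _ _ _
  have hc : ∀ m n, m ≤ n → ∃ g : (p m).1 ⟶ (p n).1, (p m).2 ≫ g = (p n).2 := by
    intro m n hmn
    have hm' : m ≤ fun _ => Finset.univ.sup n := le_trans hmn (hNof n)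
    rw [hwd m (Finset.univ.sup n) hm']
    obtain ⟨r, hr⟩ := kgIni_res (T (Finset.univ.sup n)).2 n (hle n _ (hNof n))
    have hmn' : m ≤ KGraph.d (k := k) (p n).2 := by rw [hd]; exact hmn
    obtain ⟨r2, hr2⟩ := kgIni_res (p n).2 m hmn'
    have e3 := kgIni_trans hr m hmn' (hle m _ hm')
    rw [e3]
    exact ⟨r2, hr2⟩
  refine ⟨kgRec v p hd hc, ?_⟩
  have h0 := kg_deg_zero (p 0).2 (hd 0)
  exact congrArg Sigma.fst h0

/-- Each cylinder set is compact. -/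
lemma zset_compact
    (hrowfin : ∀ (w : Λ) (n : Fin k → ℕ),
      {t : Σ b : Λ, w ⟶ b | KGraph.d (k := k) t.2 = n}.Finite)
    {a b : Λ} (f : a ⟶ b) : @IsCompact _ (pathTopology k Λ) (Zset f) := by
  classical
  letI tI : TopologicalSpace (InfPath k Λ) := pathTopology k Λ
  show IsCompact (Zset f)
  -- the finite "coordinate" spaces
  let F : (Fin k → ℕ) → Type _ :=
    fun n => {t : Σ c : Λ, a ⟶ c // KGraph.d (k := k) t.2 = n}
  letI : ∀ n, TopologicalSpace (F n) := fun _ => ⊥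
  haveI : ∀ n, DiscreteTopology (F n) := fun _ => ⟨rfl⟩
  haveI : ∀ n, Finite (F n) := fun n => (hrowfin a n).to_subtype
  haveI : ∀ n, CompactSpace (F n) := fun _ => Finite.compactSpace
  -- the compatibility subset
  let Cpt : Set (∀ n, F n) :=
    {p | ∀ m n (_ : m ≤ n), ∃ g : (p m).1.1 ⟶ (p n).1.1, (p m).1.2 ≫ g = (p n).1.2}
  have hCptClosed : IsClosed Cpt := by
    have hEq : Cpt = ⋂ (m) (n) (_ : m ≤ n),
        (fun p : ∀ n, F n => (p m, p n)) ⁻¹'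
          {u : F m × F n | ∃ g : u.1.1.1 ⟶ u.2.1.1, u.1.1.2 ≫ g = u.2.1.2} := by
      ext p
      simp [Cpt, Set.mem_iInter]
    rw [hEq]
    exact isClosed_iInter fun m => isClosed_iInter fun n => isClosed_iInter fun _ =>
      IsClosed.preimage ((continuous_apply m).prodMk (continuous_apply n))
        (isClosed_discrete _)
  haveI : CompactSpace Cpt :=
    isCompact_iff_compactSpace.mp (hCptClosed.isCompact)
  -- the reconstruction map
  let Ψ : Cpt → InfPath k Λ :=
    fun q => kgRec a (fun n => (q.1 n).1) (fun n => (q.1 n).2) q.2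
  -- membership in a cylinder set depends only on one coordinate
  have key : ∀ (q : Cpt) {c e : Λ} (g : c ⟶ e),
      (Ψ q ∈ Zset g ↔ ∃ (hac : a = c) (h1 : (q.1 (KGraph.d (k := k) g)).1.1 = e),
        (q.1 (KGraph.d (k := k) g)).1.2 = eqToHom hac ≫ g ≫ eqToHom h1.symm) := by
    intro q c e g
    obtain ⟨h0a, h0b⟩ := pair_eq_elim (kg_deg_zero (q.1 0).1.2 (q.1 0).2)
    have hspec : (q.1 0).1.2 ≫ (Ψ q).edge 0 (KGraph.d (k := k) g) zero_le =
        (q.1 (KGraph.d (k := k) g)).1.2 :=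
      kgRec_spec a (fun n => (q.1 n).1) (fun n => (q.1 n).2) q.2 0 _ zero_le
    constructor
    · rintro ⟨h0, h1, he⟩
      refine ⟨h0a.symm.trans h0, h1, ?_⟩
      rw [← hspec, he, h0b]
      simp
      exact eqToHom_trans_assoc _ _ _
    · rintro ⟨hac, h1, ht⟩
      refine ⟨h0a.trans hac, h1, ?_⟩
      refine kgRec_edge_eq a (fun n => (q.1 n).1) (fun n => (q.1 n).2) q.2 0 _
        zero_le ?_
      rw [h0b, ht]
      simp
      exact eqToHom_trans_assoc _ _ _
  -- Ψ is continuous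
  have hcont : Continuous Ψ := by
    have : @Continuous _ _ _ (TopologicalSpace.generateFrom
        {S | ∃ (a b : Λ) (f : a ⟶ b), S = Zset f}) Ψ := by
      rw [continuous_generateFrom_iff]
      rintro S ⟨c, e, g, rfl⟩
      have hEq : Ψ ⁻¹' Zset g = (fun q : Cpt => q.1 (KGraph.d (k := k) g)) ⁻¹'
          {t : F (KGraph.d (k := k) g) | ∃ (hac : a = c) (h1 : t.1.1 = e),
            t.1.2 = eqToHom hac ≫ g ≫ eqToHom h1.symm} := by
        ext q
        exact key q g
      rw [hEq]
      exact (isOpen_discrete _).preimage ((continuous_apply _).comp continuous_subtype_val)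
    exact this
  -- the anchored subset
  let K : Set Cpt := {q | (q.1 (KGraph.d (k := k) f)).1 = ⟨b, f⟩}
  have hKclosed : IsClosed K := by
    have hEq : K = (fun q : Cpt => q.1 (KGraph.d (k := k) f)) ⁻¹'
        {t : F (KGraph.d (k := k) f) | t.1 = ⟨b, f⟩} := rfl
    rw [hEq]
    exact IsClosed.preimage ((continuous_apply _).comp continuous_subtype_val)
      (isClosed_discrete _)
  have hKcomp : IsCompact K := hKclosed.isCompact
  -- the image of K is the cylinder set
  have himg : Ψ '' K = Zset f := by
    apply Set.eq_of_subset_of_subset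
    · rintro x ⟨q, hq, rfl⟩
      refine (key q f).mpr ⟨rfl, ?_, ?_⟩
      · exact congrArg Sigma.fst hq
      · obtain ⟨h1, hb1⟩ := pair_eq_elim hq
        rw [hb1]
        simp
    · intro x hx
      obtain ⟨h0, h1, he⟩ := hx
      let p0 : ∀ _ : Fin k → ℕ, Σ w : Λ, a ⟶ w :=
        fun n => ⟨x.vert n, eqToHom h0.symm ≫ x.edge 0 n zero_le⟩
      have hdp : ∀ n, KGraph.d (k := k) (p0 n).2 = n := by
        intro n
        show KGraph.d (k := k) (eqToHom h0.symm ≫ x.edge 0 n zero_le) = n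
        rw [KGraph.d_comp, kg_d_eqToHom, x.deg]
        funext i
        simp
      have hcp : ∀ m n, m ≤ n → ∃ g : (p0 m).1 ⟶ (p0 n).1, (p0 m).2 ≫ g = (p0 n).2 := by
        intro m n hmn
        refine ⟨x.edge m n hmn, ?_⟩
        show (eqToHom h0.symm ≫ x.edge 0 m zero_le) ≫ x.edge m n hmn =
          eqToHom h0.symm ≫ x.edge 0 n zero_le
        rw [Category.assoc, x.edge_comp]
      let q : Cpt := ⟨fun n => ⟨p0 n, hdp n⟩, hcp⟩
      refine ⟨q, ?_, ?_⟩
      · show (⟨x.vert (KGraph.d (k := k) f),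
          eqToHom h0.symm ≫ x.edge 0 (KGraph.d (k := k) f) zero_le⟩
            : Σ w : Λ, a ⟶ w) = ⟨b, f⟩
        rw [he]
        have h8 : eqToHom h0.symm ≫ eqToHom h0 ≫ f ≫ eqToHom h1.symm =
            f ≫ eqToHom h1.symm := by
          simp
        rw [h8]
        exact pair_eq_intro h1 f
      · refine infPath_ext (fun n => rfl) ?_
        intro m n hmn
        have h7 : (Ψ q).edge m n hmn = x.edge m n hmn := by
          refine kgRec_edge_eq a (fun n => (q.1 n).1) (fun n => (q.1 n).2) q.2 m n hmn ?_
          show (eqToHom h0.symm ≫ x.edge 0 m zero_le) ≫ x.edge m n hmn =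
            eqToHom h0.symm ≫ x.edge 0 n zero_le
          rw [Category.assoc, x.edge_comp]
        rw [h7]
        exact (Category.comp_id _).trans (Category.id_comp _).symm
  rw [← himg]
  exact hKcomp.image hcont

end Aux

/-- In a row-finite `k`-graph with no sources, each cylinder set `Z(λ)` is compact
in the cylinder-set topology on `Λ^∞`; consequently `Λ^∞` is compact iff `Λ^0` is
finite. -/
theorem cylinder_sets_compact
    (k : ℕ) (Λ : Type u) [Category.{v} Λ] [KGraph k Λ]
    (hrowfin : ∀ (v : Λ) (n : Fin k → ℕ),
      {t : Σ b : Λ, v ⟶ b | KGraph.d (k := k) t.2 = n}.Finite)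
    (hnosource : ∀ (v : Λ) (n : Fin k → ℕ),
      {t : Σ b : Λ, v ⟶ b | KGraph.d (k := k) t.2 = n}.Nonempty) :
    (∀ {a b : Λ} (f : a ⟶ b), @IsCompact _ (pathTopology k Λ) (Zset f)) ∧
      (@CompactSpace _ (pathTopology k Λ) ↔ Finite Λ) := by
  letI tI : TopologicalSpace (InfPath k Λ) := pathTopology k Λ
  have part1 : ∀ {a b : Λ} (f : a ⟶ b), @IsCompact _ (pathTopology k Λ) (Zset f) :=
    fun {a b} f => zset_compact hrowfin f
  refine ⟨fun {a b} f => part1 f, ?_⟩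
  show CompactSpace (InfPath k Λ) ↔ Finite Λ
  constructor
  · intro hcomp
    haveI := hcomp
    have hcover : (Set.univ : Set (InfPath k Λ)) ⊆ ⋃ v : Λ, Zset (𝟙 v) :=
      fun x _ => Set.mem_iUnion.mpr ⟨x.vert 0, mem_Zset_id x⟩
    have hopen : ∀ v : Λ, IsOpen (Zset (𝟙 v)) := fun v =>
      TopologicalSpace.isOpen_generateFrom_of_mem
        (g := {S | ∃ (a b : Λ) (f : a ⟶ b), S = Zset (k := k) f}) ⟨v, v, 𝟙 v, rfl⟩
    obtain ⟨t, ht⟩ := isCompact_univ.elim_finite_subcover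
      (fun v : Λ => Zset (𝟙 v)) hopen hcover
    have hall : ∀ v : Λ, v ∈ t := by
      intro v
      obtain ⟨x, hx⟩ := exists_path hnosource v
      have hxv : x ∈ Zset (𝟙 v) := by
        have h9 := mem_Zset_id x
        rw [hx] at h9
        exact h9
      have h10 := ht (Set.mem_univ x)
      simp only [Set.mem_iUnion] at h10
      obtain ⟨w, hwt, hxw⟩ := h10
      obtain ⟨h0w, -, -⟩ := hxw
      obtain ⟨h0v, -, -⟩ := hxv
      have : v = w := h0v.symm.trans h0w
      rwa [this]
    have hsub : (Set.univ : Set Λ) ⊆ ↑t := fun v _ => hall v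
    exact Set.finite_univ_iff.mp (t.finite_toSet.subset hsub)
  · intro hfin
    rw [← isCompact_univ_iff]
    have huniv : (Set.univ : Set (InfPath k Λ)) = ⋃ v : Λ, Zset (𝟙 v) := by
      apply Set.eq_of_subset_of_subset
      · exact fun x _ => Set.mem_iUnion.mpr ⟨x.vert 0, mem_Zset_id x⟩
      · exact fun x _ => Set.mem_univ x
    rw [huniv]
    exact isCompact_iUnion fun v => part1 (𝟙 v)
end

section
/- Let Λ be a row-finite k-graph with no sources satisfying the aperiodicity condition: for every v ∈ Λ^0 there is an aperiodic x ∈ Λ^∞(v). Then the aperiodic infinite paths are dense in Λ^∞ (with the cylinder set topology); equivalently, the path groupoid G_Λ is essentially free. -/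
open CategoryTheory

universe v u

variable (k : ℕ) (Λ : Type u) [Category.{v} Λ] [KGraph k Λ]

variable {k Λ}

/-- An infinite path is aperiodic if `σ^m x = σ^n x` implies `m = n`. -/
def Aperiodic' {k : ℕ} {Λ : Type u} [Category.{v} Λ] [KGraph k Λ]
    (x : InfPath k Λ) : Prop :=
  ∀ m n : Fin k → ℕ, x.shift m = x.shift n → m = n

lemma InfPath.edge_cast (x : InfPath k Λ) {p q p' q' : Fin k → ℕ}
    (hp : p = p') (hq : q = q') (h : p ≤ q) (h' : p' ≤ q') :
    x.edge p q h =
      eqToHom (congrArg x.vert hp) ≫ x.edge p' q' h' ≫ eqToHom (congrArg x.vert hq).symm := by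
  subst hp; subst hq; simp

lemma InfPath.shift_shift (x : InfPath k Λ) (p q : Fin k → ℕ) :
    (x.shift p).shift q = x.shift (p + q) := by
  apply InfPath.ext'
  · intro m n h
    show x.edge ((m + q) + p) ((n + q) + p) _ = _
    exact x.edge_cast (by ring) (by ring) _ _

namespace AuxKG

lemma d_eqToHom {a b : Λ} (e : a = b) : KGraph.d (k := k) (eqToHom e) = 0 := by
  subst e; simp [KGraph.d_id]

lemma triple_eq {a b : Λ} {t s : Σ c : Λ, (a ⟶ c) × (c ⟶ b)} (h : t = s) :
    ∃ e : t.1 = s.1, s.2.1 = t.2.1 ≫ eqToHom e ∧ s.2.2 = eqToHom e.symm ≫ t.2.2 := by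
  subst h; exact ⟨rfl, by simp, by simp⟩

section Ext

variable (z : InfPath k Λ) {a : Λ} (f : a ⟶ z.vert 0) (n : Fin k → ℕ)
  (hf : KGraph.d (k := k) f = n)

/-- `F m = f · z(0, (m⊔n)-n)`. -/
def Fm (m : Fin k → ℕ) : a ⟶ z.vert ((m ⊔ n) - n) :=
  f ≫ z.edge 0 ((m ⊔ n) - n) zero_le

lemma dFm (hf : KGraph.d (k := k) f = n) (m : Fin k → ℕ) :
    KGraph.d (k := k) (Fm z f n m) = m + ((m ⊔ n) - m) := by
  rw [Fm, KGraph.d_comp, hf, z.deg]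
  funext i
  simp only [Pi.add_apply, Pi.sub_apply, Pi.sup_apply, Pi.zero_apply]
  omega

include hf

noncomputable def fac (m : Fin k → ℕ) : Σ c : Λ, (a ⟶ c) × (c ⟶ z.vert ((m ⊔ n) - n)) :=
  (KGraph.factor (Fm z f n m) m ((m ⊔ n) - m) (dFm z f n hf m)).choose

noncomputable def C (m : Fin k → ℕ) : Λ := (fac z f n hf m).1
noncomputable def A (m : Fin k → ℕ) : a ⟶ C z f n hf m := (fac z f n hf m).2.1
noncomputable def B (m : Fin k → ℕ) : C z f n hf m ⟶ z.vert ((m ⊔ n) - n) :=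
  (fac z f n hf m).2.2

lemma fac_spec (m : Fin k → ℕ) :
    KGraph.d (k := k) (A z f n hf m) = m ∧
    KGraph.d (k := k) (B z f n hf m) = (m ⊔ n) - m ∧
    A z f n hf m ≫ B z f n hf m = Fm z f n m :=
  (KGraph.factor (Fm z f n m) m ((m ⊔ n) - m) (dFm z f n hf m)).choose_spec.1

lemma fac_unique (m : Fin k → ℕ) (t : Σ c : Λ, (a ⟶ c) × (c ⟶ z.vert ((m ⊔ n) - n)))
    (ht : KGraph.d (k := k) t.2.1 = m ∧ KGraph.d (k := k) t.2.2 = (m ⊔ n) - m ∧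
      t.2.1 ≫ t.2.2 = Fm z f n m) : t = fac z f n hf m :=
  (KGraph.factor (Fm z f n m) m ((m ⊔ n) - m) (dFm z f n hf m)).choose_spec.2 t ht

lemma exists_unique_edge {p q : Fin k → ℕ} (h : p ≤ q) :
    ∃! g : C z f n hf p ⟶ C z f n hf q,
      KGraph.d (k := k) g = q - p ∧ A z f n hf p ≫ g = A z f n hf q := by
  have hpq : ∀ i, p i ≤ q i := fun i => h i
  -- existence
  have hle : (p ⊔ n) - n ≤ (q ⊔ n) - n := by
    intro i
    simp only [Pi.sub_apply, Pi.sup_apply]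
    have := hpq i; omega
  have key : Fm z f n q = Fm z f n p ≫ z.edge _ _ hle := by
    rw [Fm, Fm, Category.assoc, z.edge_comp]
  set G : C z f n hf p ⟶ z.vert ((q ⊔ n) - n) :=
    B z f n hf p ≫ z.edge _ _ hle with hG
  have dG : KGraph.d (k := k) G = (q - p) + ((q ⊔ n) - q) := by
    rw [hG, KGraph.d_comp, (fac_spec z f n hf p).2.1, z.deg]
    funext i
    simp only [Pi.add_apply, Pi.sub_apply, Pi.sup_apply]
    have := hpq i; omega
  obtain ⟨⟨e, g, h'⟩, ⟨hg, hh, hcomp⟩, -⟩ := KGraph.factor G (q - p) ((q ⊔ n) - q) dG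
  have hT : (⟨e, (A z f n hf p ≫ g, h')⟩ : Σ c : Λ, (a ⟶ c) × (c ⟶ z.vert ((q ⊔ n) - n)))
      = fac z f n hf q := by
    apply fac_unique
    refine ⟨?_, hh, ?_⟩
    · rw [KGraph.d_comp, (fac_spec z f n hf p).1, hg]
      funext i
      simp only [Pi.add_apply, Pi.sub_apply]
      have := hpq i; omega
    · show (A z f n hf p ≫ g) ≫ h' = Fm z f n q
      rw [Category.assoc, hcomp, hG, ← Category.assoc, (fac_spec z f n hf p).2.2, key]
  obtain ⟨e', hA, -⟩ := triple_eq hT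
  refine ⟨g ≫ eqToHom e', ⟨?_, ?_⟩, ?_⟩
  · rw [KGraph.d_comp, hg, d_eqToHom (a := e) (b := C z f n hf q) e', add_zero]
  · rw [← Category.assoc]
    exact hA.symm
  · -- uniqueness
    intro g' ⟨hd', hc'⟩
    have hw : KGraph.d (k := k) (g ≫ eqToHom e') = q - p ∧
        A z f n hf p ≫ (g ≫ eqToHom e') = A z f n hf q := by
      constructor
      · rw [KGraph.d_comp, hg, d_eqToHom, add_zero]
      · rw [← Category.assoc]; exact hA.symm
    have hdAq : KGraph.d (k := k) (A z f n hf q) = p + (q - p) := by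
      rw [(fac_spec z f n hf q).1]
      funext i
      simp only [Pi.add_apply, Pi.sub_apply]
      have := hpq i; omega
    obtain ⟨t0, ht0, hu⟩ := KGraph.factor (A z f n hf q) p (q - p) hdAq
    have h1 := hu ⟨C z f n hf p, (A z f n hf p, g')⟩ ⟨(fac_spec z f n hf p).1, hd', hc'⟩
    have h2 := hu ⟨C z f n hf p, (A z f n hf p, g ≫ eqToHom e')⟩
      ⟨(fac_spec z f n hf p).1, hw.1, hw.2⟩
    obtain ⟨e2, -, h3⟩ := triple_eq (h1.trans h2.symm)
    rw [show e2 = rfl from rfl] at h3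
    simpa using h3.symm

noncomputable def E {p q : Fin k → ℕ} (h : p ≤ q) : C z f n hf p ⟶ C z f n hf q :=
  (exists_unique_edge z f n hf h).choose

lemma E_spec {p q : Fin k → ℕ} (h : p ≤ q) :
    KGraph.d (k := k) (E z f n hf h) = q - p ∧
      A z f n hf p ≫ E z f n hf h = A z f n hf q :=
  (exists_unique_edge z f n hf h).choose_spec.1

lemma E_unique {p q : Fin k → ℕ} (h : p ≤ q) (g : C z f n hf p ⟶ C z f n hf q)
    (hd : KGraph.d (k := k) g = q - p) (hc : A z f n hf p ≫ g = A z f n hf q) :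
    g = E z f n hf h :=
  (exists_unique_edge z f n hf h).choose_spec.2 g ⟨hd, hc⟩

noncomputable def ext : InfPath k Λ where
  vert := C z f n hf
  edge p q h := E z f n hf h
  edge_self m := by
    symm
    apply E_unique
    · rw [KGraph.d_id]; funext i; simp
    · simp
  edge_comp p q r h₁ h₂ := by
    apply E_unique
    · rw [KGraph.d_comp, (E_spec z f n hf h₁).1, (E_spec z f n hf h₂).1]
      funext i
      simp only [Pi.add_apply, Pi.sub_apply]
      have h1i : p i ≤ q i := h₁ i; have h2i : q i ≤ r i := h₂ i; omega
    · rw [← Category.assoc, (E_spec z f n hf h₁).2, (E_spec z f n hf h₂).2]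
  deg p q h := (E_spec z f n hf h).1

lemma A_add (m : Fin k → ℕ) : ∃ e : z.vert m = C z f n hf (m + n),
    A z f n hf (m + n) = f ≫ z.edge 0 m zero_le ≫ eqToHom e := by
  have hW : (m + n) ⊔ n - n = m := by
    funext i
    simp only [Pi.sub_apply, Pi.sup_apply, Pi.add_apply]
    omega
  have hT : (⟨z.vert ((m + n) ⊔ n - n), (Fm z f n (m + n), 𝟙 _)⟩ :
      Σ c : Λ, (a ⟶ c) × (c ⟶ z.vert ((m + n) ⊔ n - n))) = fac z f n hf (m + n) := by
    apply fac_unique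
    refine ⟨?_, ?_, Category.comp_id _⟩
    · rw [Fm, KGraph.d_comp, hf, z.deg]
      funext i
      simp only [Pi.add_apply, Pi.sub_apply, Pi.sup_apply, Pi.zero_apply]
      omega
    · rw [KGraph.d_id]
      funext i
      simp only [Pi.zero_apply, Pi.sub_apply, Pi.sup_apply, Pi.add_apply]
      omega
  obtain ⟨e, hA, -⟩ := triple_eq hT
  have hA' : A z f n hf (m + n) = Fm z f n (m + n) ≫ eqToHom e := hA
  refine ⟨(congrArg z.vert hW).symm.trans e, ?_⟩
  rw [hA', Fm, z.edge_cast rfl hW zero_le zero_le]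
  simp [eqToHom_trans]
  rfl

lemma vertC (m : Fin k → ℕ) : C z f n hf (m + n) = z.vert m := (A_add z f n hf m).choose.symm

lemma E_add {p q : Fin k → ℕ} (h : p ≤ q) (hpq : p + n ≤ q + n)
    (ep : z.vert p = C z f n hf (p + n)) (eq' : z.vert q = C z f n hf (q + n)) :
    E z f n hf hpq = eqToHom ep.symm ≫ z.edge p q h ≫ eqToHom eq' := by
  symm
  apply E_unique
  · rw [KGraph.d_comp, KGraph.d_comp, d_eqToHom, d_eqToHom, z.deg]
    funext i
    simp only [Pi.zero_apply, Pi.add_apply, Pi.sub_apply]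
    omega
  · obtain ⟨e1, h1⟩ := A_add z f n hf p
    obtain ⟨e2, h2⟩ := A_add z f n hf q
    rw [h1, h2]
    have : e1 = ep := rfl
    subst this
    have : e2 = eq' := rfl
    subst this
    simp [← z.edge_comp 0 p q zero_le h]

lemma ext_shift_n : (ext z f n hf).shift n = z := by
  apply InfPath.ext' _ _ (fun m => vertC z f n hf m)
  intro p q h
  show E z f n hf (add_le_add h le_rfl) = _
  rw [E_add z f n hf h (add_le_add h le_rfl) (vertC z f n hf p).symm (vertC z f n hf q).symm]
  rfl

lemma ext_aperiodic (hz : ∀ m m' : Fin k → ℕ, z.shift m = z.shift m' → m = m') :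
    ∀ m m' : Fin k → ℕ, (ext z f n hf).shift m = (ext z f n hf).shift m' → m = m' := by
  intro m m' hmm
  apply hz
  have key : ∀ r : Fin k → ℕ, z.shift r = (ext z f n hf).shift (r + n) := fun r =>
    (congrArg (fun w : InfPath k Λ => w.shift r) (ext_shift_n z f n hf).symm).trans
      ((InfPath.shift_shift _ n r).trans (congrArg _ (add_comm n r)))
  have h2 : ((ext z f n hf).shift m).shift n = ((ext z f n hf).shift m').shift n := by rw [hmm]
  rw [InfPath.shift_shift, InfPath.shift_shift] at h2
  rw [key m, key m']
  exact h2

lemma ext_head : ∃ (h0 : (ext z f n hf).vert 0 = a) (h1 : (ext z f n hf).vert n = z.vert 0),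
    (ext z f n hf).edge 0 n zero_le = eqToHom h0 ≫ f ≫ eqToHom h1.symm := by
  have hT0 : (⟨a, (𝟙 a, Fm z f n 0)⟩ :
      Σ c : Λ, (a ⟶ c) × (c ⟶ z.vert ((0 : Fin k → ℕ) ⊔ n - n))) = fac z f n hf 0 := by
    apply fac_unique
    refine ⟨KGraph.d_id a, ?_, Category.id_comp _⟩
    rw [Fm, KGraph.d_comp, hf, z.deg]
    funext i
    simp only [Pi.add_apply, Pi.sub_apply, Pi.sup_apply, Pi.zero_apply]
    omega
  have hTn : (⟨z.vert 0, (f, z.edge 0 (n ⊔ n - n) zero_le)⟩ :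
      Σ c : Λ, (a ⟶ c) × (c ⟶ z.vert (n ⊔ n - n))) = fac z f n hf n := by
    apply fac_unique
    refine ⟨hf, ?_, rfl⟩
    rw [z.deg]
    funext i
    simp only [Pi.sub_apply, Pi.sup_apply, Pi.zero_apply]
    omega
  obtain ⟨e0, hA0, -⟩ := triple_eq hT0
  obtain ⟨en, hAn, -⟩ := triple_eq hTn
  have hA0' : A z f n hf 0 = 𝟙 a ≫ eqToHom e0 := hA0
  have hAn' : A z f n hf n = f ≫ eqToHom en := hAn
  refine ⟨e0.symm, en.symm, ?_⟩
  show E z f n hf zero_le = _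
  symm
  apply E_unique
  · have key : ∀ {x y w z' : Λ} (e1 : x = y) (g : y ⟶ w) (e2 : w = z'),
        KGraph.d (k := k) (eqToHom e1 ≫ g ≫ eqToHom e2) = KGraph.d (k := k) g := by
      intros; subst_vars; simp
    refine (key _ _ _).trans ?_
    rw [hf]
    exact (tsub_zero n).symm
  · rw [hA0', hAn']
    show (𝟙 a ≫ eqToHom e0) ≫ eqToHom e0.symm ≫ f ≫ eqToHom en.symm.symm = f ≫ eqToHom en
    simp

end Ext

section Topo

def Agree (x y : InfPath k Λ) (n : Fin k → ℕ) : Prop :=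
  ∃ (h0 : y.vert 0 = x.vert 0) (h1 : y.vert n = x.vert n),
    y.edge 0 n zero_le = eqToHom h0 ≫ x.edge 0 n zero_le ≫ eqToHom h1.symm

lemma agree_mono {x y : InfPath k Λ} {m n : Fin k → ℕ} (hmn : m ≤ n)
    (h : Agree x y n) : Agree x y m := by
  obtain ⟨h0, h1, he⟩ := h
  have hd : KGraph.d (k := k) (x.edge 0 n zero_le) = m + (n - m) := by
    rw [x.deg]
    funext i
    simp only [Pi.add_apply, Pi.sub_apply, Pi.zero_apply]
    have : m i ≤ n i := hmn i
    omega
  obtain ⟨t0, ht0, hu⟩ := KGraph.factor (x.edge 0 n zero_le) m (n - m) hd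
  have hx := hu ⟨x.vert m, (x.edge 0 m zero_le, x.edge m n hmn)⟩
    ⟨by rw [x.deg]; funext i; simp, by rw [x.deg], x.edge_comp _ _ _ _ _⟩
  have hy := hu ⟨y.vert m, (eqToHom h0.symm ≫ y.edge 0 m zero_le,
      y.edge m n hmn ≫ eqToHom h1)⟩ ?cond
  case cond =>
    refine ⟨?_, ?_, ?_⟩
    · rw [KGraph.d_comp, d_eqToHom, y.deg]
      funext i; simp
    · rw [KGraph.d_comp, d_eqToHom, y.deg, add_zero]
    · show (eqToHom h0.symm ≫ y.edge 0 m zero_le) ≫ (y.edge m n hmn ≫ eqToHom h1)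
        = x.edge 0 n zero_le
      rw [Category.assoc, ← Category.assoc (y.edge 0 m zero_le), y.edge_comp, he]
      simp
  obtain ⟨e, hc, -⟩ := triple_eq (hy.trans hx.symm)
  refine ⟨h0, e, ?_⟩
  have hc' : x.edge 0 m zero_le = (eqToHom h0.symm ≫ y.edge 0 m zero_le) ≫ eqToHom e := hc
  rw [hc']
  simp

lemma exists_extension (z : InfPath k Λ)
    (hz : ∀ m m' : Fin k → ℕ, z.shift m = z.shift m' → m = m')
    {a : Λ} (f : a ⟶ z.vert 0) (n : Fin k → ℕ) (hf : KGraph.d (k := k) f = n) :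
    ∃ y : InfPath k Λ, (∀ m m' : Fin k → ℕ, y.shift m = y.shift m' → m = m') ∧
      ∃ (h0 : y.vert 0 = a) (h1 : y.vert n = z.vert 0),
        y.edge 0 n zero_le = eqToHom h0 ≫ f ≫ eqToHom h1.symm :=
  ⟨ext z f n hf, ext_aperiodic z f n hf hz, ext_head z f n hf⟩

lemma open_finite_det {U : Set (InfPath k Λ)}
    (hU : TopologicalSpace.GenerateOpen {S | ∃ (a b : Λ) (f : a ⟶ b), S = Zset f} U) :
    ∀ x ∈ U, ∃ n : Fin k → ℕ, ∀ y, Agree x y n → y ∈ U := by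
  induction hU with
  | basic S hS =>
    obtain ⟨a, b, g, rfl⟩ := hS
    rintro x ⟨hx0, hx1, hxe⟩
    refine ⟨KGraph.d (k := k) g, ?_⟩
    rintro y ⟨h0, h1, he⟩
    refine ⟨h0.trans hx0, h1.trans hx1, ?_⟩
    rw [he, hxe]
    simp
  | univ => exact fun x _ => ⟨0, fun y _ => trivial⟩
  | inter U V hUo hVo ihU ihV =>
    intro x hx
    obtain ⟨nU, hnU⟩ := ihU x hx.1
    obtain ⟨nV, hnV⟩ := ihV x hx.2
    exact ⟨nU ⊔ nV, fun y hy =>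
      ⟨hnU y (agree_mono le_sup_left hy), hnV y (agree_mono le_sup_right hy)⟩⟩
  | sUnion S hS ih =>
    rintro x ⟨U, hUS, hxU⟩
    obtain ⟨n, hn⟩ := ih U hUS x hxU
    exact ⟨n, fun y hy => ⟨U, hUS, hn y hy⟩⟩

end Topo

end AuxKG

/-- If a row-finite `k`-graph with no sources satisfies the aperiodicity condition
(every vertex receives an aperiodic infinite path), then the aperiodic paths are
dense in `Λ^∞` with the cylinder-set topology; i.e. the path groupoid is
essentially free. -/
theorem aperiodic_paths_dense
    (k : ℕ) (Λ : Type u) [Category.{v} Λ] [KGraph k Λ]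
    (hrowfin : ∀ (v : Λ) (n : Fin k → ℕ),
      {t : Σ b : Λ, v ⟶ b | KGraph.d (k := k) t.2 = n}.Finite)
    (hnosource : ∀ (v : Λ) (n : Fin k → ℕ),
      {t : Σ b : Λ, v ⟶ b | KGraph.d (k := k) t.2 = n}.Nonempty)
    (haper : ∀ v : Λ, ∃ x : InfPath k Λ, x.vert 0 = v ∧ Aperiodic' x) :
    @Dense _ (pathTopology k Λ) {x : InfPath k Λ | Aperiodic' x} := by
  classical
  letI : TopologicalSpace (InfPath k Λ) := pathTopology k Λ
  rw [dense_iff_inter_open]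
  intro U hUo hne
  obtain ⟨x, hx⟩ := hne
  have hgen : TopologicalSpace.GenerateOpen
      {S | ∃ (a b : Λ) (f : a ⟶ b), S = Zset f} U := hUo
  obtain ⟨n, hn⟩ := AuxKG.open_finite_det hgen x hx
  obtain ⟨z, hz0, hzap⟩ := haper (x.vert n)
  have hf : KGraph.d (k := k) (x.edge 0 n zero_le ≫ eqToHom hz0.symm) = n := by
    rw [KGraph.d_comp, x.deg, AuxKG.d_eqToHom, add_zero]
    funext i; simp
  obtain ⟨y, hyap, h0, h1, he⟩ := AuxKG.exists_extension z hzap _ n hf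
  refine ⟨y, hn y ⟨h0, h1.trans hz0, ?_⟩, hyap⟩
  rw [he]
  simp
end
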